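/- Let q be a prime power and r_1, r_2, m positive integers with r_1 | m, r_2 | m and t = gcd(r_1, r_2). Then the number of x ∈ F_{q^m} with Tr_{F_{q^m}/F_{q^{r_1}}}(x) = 0 and Tr_{F_{q^m}/F_{q^{r_2}}}(x) = 0 equals q^{m − r_1 − r_2 + t}. -/

import Mathlib

open Finset

private lemma fiberCard {G H : Type*} [AddCommGroup G] [AddCommGroup H] [Fintype G]
    [DecidableEq H] (f : G →+ H) {b : H} (hb : ∃ x, f x = b) :
    (Finset.univ.filter fun x => f x = b).card
      = (Finset.univ.filter fun x => f x = 0).card := by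
  classical
  obtain ⟨x₀, hx₀⟩ := hb
  apply Finset.card_nbij' (i := fun x => x - x₀) (j := fun y => y + x₀)
  · intro a ha; simp only [Finset.mem_coe, mem_filter, mem_univ, true_and] at ha ⊢
    simp [map_sub, ha, hx₀]
  · intro a ha; simp only [Finset.mem_coe, mem_filter, mem_univ, true_and] at ha ⊢
    simp [map_add, ha, hx₀]
  · intro a _; simp
  · intro a _; simp

-- root count bound
private lemma rootBound {K : Type*} [Field K] [Fintype K] [DecidableEq K] {n : ℕ} (hn : 2 ≤ n) :
    (Finset.univ.filter fun x : K => x ^ n = x).card ≤ n := by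
  classical
  set f : Polynomial K := Polynomial.X ^ n - Polynomial.X with hf
  have hne : f ≠ 0 := by
    intro h
    have : f.coeff n = 0 := by rw [h]; simp
    rw [hf] at this
    rw [Polynomial.coeff_sub, Polynomial.coeff_X_pow, Polynomial.coeff_X] at this
    rw [if_neg (by omega : ¬ (1:ℕ) = n)] at this
    simp at this
  have hsub : (Finset.univ.filter fun x : K => x ^ n = x) ⊆ f.roots.toFinset := by
    intro x hx
    simp only [mem_filter, mem_univ, true_and] at hx
    rw [Multiset.mem_toFinset, Polynomial.mem_roots hne]
    simp [hf, Polynomial.IsRoot, hx]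
  calc (Finset.univ.filter fun x : K => x ^ n = x).card ≤ f.roots.toFinset.card :=
        Finset.card_le_card hsub
    _ ≤ Multiset.card f.roots := Multiset.toFinset_card_le _
    _ ≤ f.natDegree := Polynomial.card_roots' f
    _ ≤ n := by
        refine le_trans (Polynomial.natDegree_sub_le _ _) ?_
        simp [Polynomial.natDegree_X_pow]
        omega

private lemma gcdDvd {q a b : ℕ} (hq : 1 ≤ q) :
    Nat.gcd (q ^ a - 1) (q ^ b - 1) ∣ q ^ (Nat.gcd a b) - 1 := by
  set d := Nat.gcd (q ^ a - 1) (q ^ b - 1) with hd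
  have h1 : ∀ c : ℕ, d ∣ q ^ c - 1 → ((q : ZMod d)) ^ c = 1 := by
    intro c hc
    have := (Nat.modEq_iff_dvd' (Nat.one_le_pow _ _ hq)).2 hc
    have := (ZMod.natCast_eq_natCast_iff _ _ _).2 this.symm
    push_cast at this
    simpa using this
  have ha := h1 a (Nat.gcd_dvd_left _ _)
  have hb := h1 b (Nat.gcd_dvd_right _ _)
  have := pow_gcd_eq_one.mpr ⟨ha, hb⟩
  have h2 : ((q ^ Nat.gcd a b : ℕ) : ZMod d) = ((1 : ℕ) : ZMod d) := by push_cast; simpa using this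
  have := (ZMod.natCast_eq_natCast_iff _ _ _).1 h2
  exact (Nat.modEq_iff_dvd' (Nat.one_le_pow _ _ hq)).1 this.symm


private lemma cardPowEqGe {E : Type*} [Field E] [Fintype E] [DecidableEq E] {n : ℕ}
    (hn : 2 ≤ n) (hdvd : n - 1 ∣ Fintype.card E - 1) :
    n ≤ (Finset.univ.filter fun b : E => b ^ n = b).card := by
  classical
  obtain ⟨g, hg⟩ := IsCyclic.exists_ofOrder_eq_natCard (α := Eˣ)
  rw [Nat.card_eq_fintype_card, Fintype.card_units] at hg
  set c := Fintype.card E - 1 with hc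
  have hc0 : 0 < c := by
    have := Fintype.one_lt_card (α := E)
    omega
  set k := c / (n - 1) with hk
  have hkdvd : k ∣ c := Nat.div_dvd_of_dvd hdvd
  have horder : orderOf (g ^ k) = n - 1 := by
    rw [orderOf_pow, hg, Nat.gcd_eq_right hkdvd, hk, Nat.div_div_self hdvd (by omega)]
  set h := g ^ k with hh
  have hpow : ∀ i : ℕ, ((h ^ i : Eˣ) : E) ^ n = ((h ^ i : Eˣ) : E) := by
    intro i
    have h1 : (h ^ i) ^ (n - 1) = 1 := by
      rw [← pow_mul, mul_comm, pow_mul, ← horder, pow_orderOf_eq_one, one_pow]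
    have : ((h ^ i : Eˣ) : E) ^ (n - 1) = 1 := by
      rw [← Units.val_pow_eq_pow_val, h1, Units.val_one]
    calc ((h ^ i : Eˣ) : E) ^ n = ((h ^ i : Eˣ) : E) ^ (n - 1) * ((h ^ i : Eˣ) : E) := by
          rw [← pow_succ]; congr 1; omega
      _ = ((h ^ i : Eˣ) : E) := by rw [this, one_mul]
  set F : Finset E := (Finset.range (n - 1)).image (fun i => ((h ^ i : Eˣ) : E)) with hF
  have hFcard : F.card = n - 1 := by
    rw [hF, Finset.card_image_of_injOn, Finset.card_range]
    intro i hi j hj hij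
    simp only [Finset.coe_range, Set.mem_Iio] at hi hj
    have : (h ^ i : Eˣ) = h ^ j := Units.ext hij
    exact pow_injOn_Iio_orderOf (by simpa [horder]) (by simpa [horder]) this
  have hsub : insert (0 : E) F ⊆ Finset.univ.filter fun b : E => b ^ n = b := by
    intro b hb
    simp only [Finset.mem_insert, hF, Finset.mem_image] at hb
    simp only [Finset.mem_filter, Finset.mem_univ, true_and]
    rcases hb with rfl | ⟨i, _, rfl⟩
    · exact zero_pow (by omega)
    · exact hpow i
  have h0F : (0 : E) ∉ F := by
    simp only [hF, Finset.mem_image]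
    rintro ⟨i, _, hi⟩
    exact Units.ne_zero (h ^ i) hi
  calc n = (insert (0:E) F).card := by rw [Finset.card_insert_of_notMem h0F, hFcard]; omega
    _ ≤ _ := Finset.card_le_card hsub


private lemma trace_algEquiv {E K : Type*} [Field E] [Field K] [Algebra E K]
    [FiniteDimensional E K] [IsGalois E K] (e : K ≃ₐ[E] K) (x : K) :
    Algebra.trace E K (e x) = Algebra.trace E K x := by
  apply (algebraMap E K).injective
  rw [trace_eq_sum_automorphisms, trace_eq_sum_automorphisms]
  exact Fintype.sum_bijective (· * e) (Group.mulRight_bijective e) _ _ (fun σ => rfl)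

private lemma charP_of_card_pow {K : Type*} [Field K] [Fintype K] {p n : ℕ}
    (hp : p.Prime) (hn : 0 < n) (h : Fintype.card K = p ^ n) : CharP K p := by
  obtain ⟨n', hrc, hcard⟩ := FiniteField.card K (ringChar K)
  have hdvd : p ∣ ringChar K ^ (n' : ℕ) := by
    rw [← hcard, h]
    exact dvd_pow_self p hn.ne'
  have : p = ringChar K := ((Nat.prime_dvd_prime_iff_eq hp hrc).1
    (hp.dvd_of_dvd_pow hdvd))
  rw [this]
  exact ringChar.charP K

private lemma exists_frobAlg (E K : Type*) [Field E] [Fintype E] [Field K] [Fintype K]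
    [Algebra E K] : ∃ e : K ≃ₐ[E] K, ∀ x, e x = x ^ Fintype.card E := by
  obtain ⟨n, hp, hcard⟩ := FiniteField.card E (ringChar E)
  haveI : Fact (ringChar E).Prime := ⟨hp⟩
  haveI : CharP K (ringChar E) := charP_of_injective_algebraMap' E (A := K) (ringChar E)
  set p := ringChar E
  let f : K →+* K := iterateFrobenius K p n
  have hf : ∀ x : K, f x = x ^ Fintype.card E := by
    intro x; rw [hcard]; exact iterateFrobenius_def (p := p) (n := n) x
  have hcomm : ∀ a : E, f (algebraMap E K a) = algebraMap E K a := by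
    intro a
    rw [hf, ← map_pow, FiniteField.pow_card]
  have hbij : Function.Bijective f :=
    Finite.injective_iff_bijective.1 f.injective
  refine ⟨AlgEquiv.ofBijective (AlgHom.mk' f ?_) hbij, fun x => hf x⟩
  intro c x
  rw [Algebra.smul_def, Algebra.smul_def, map_mul, hcomm]

private lemma trace_pow_char {E K : Type*} [Field E] [Field K] [Algebra E K]
    [FiniteDimensional E K] [IsGalois E K] {p : ℕ} [Fact p.Prime] [CharP K p] (n : ℕ) (x : K) :
    Algebra.trace E K (x ^ p ^ n) = (Algebra.trace E K x) ^ p ^ n := by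
  apply (algebraMap E K).injective
  rw [map_pow (algebraMap E K), trace_eq_sum_automorphisms, trace_eq_sum_automorphisms,
    sum_pow_char_pow]
  exact Finset.sum_congr rfl fun σ _ => (map_pow σ x _)


private lemma cardMulImage {G H : Type*} [AddCommGroup G] [AddCommGroup H] [Fintype G]
    [DecidableEq H] (f : G →+ H) :
    Fintype.card G
      = (Finset.univ.image f).card * (Finset.univ.filter fun x => f x = 0).card := by
  classical
  rw [← Finset.card_univ (α := G), Finset.card_eq_sum_card_fiberwise
    (f := fun x => f x) (t := Finset.univ.image f)
    (fun x _ => Finset.mem_image_of_mem f (Finset.mem_univ x))]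
  rw [Finset.sum_congr rfl (fun b hb => ?_), Finset.sum_const, smul_eq_mul]
  · obtain ⟨x, _, hx⟩ := Finset.mem_image.1 hb
    exact @fiberCard G H _ _ _ _ f b ⟨x, hx⟩

private lemma trace_surjective (E K : Type*) [Field E] [Field K] [Fintype K] [Algebra E K] :
    Function.Surjective (Algebra.trace E K) := by
  have h := Algebra.trace_ne_zero E K
  have : ∃ x₀ : K, Algebra.trace E K x₀ ≠ 0 := by
    by_contra hc
    push_neg at hc
    exact h (LinearMap.ext fun x => hc x)
  obtain ⟨x₀, hx₀⟩ := this
  intro a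
  refine ⟨(a * (Algebra.trace E K x₀)⁻¹) • x₀, ?_⟩
  rw [LinearMap.map_smul, smul_eq_mul]
  field_simp

theorem stmt_8 (q r₁ r₂ m : ℕ) (E₁ E₂ K : Type*)
    [Field E₁] [Fintype E₁] [Field E₂] [Fintype E₂] [Field K] [Fintype K]
    [Algebra E₁ K] [Algebra E₂ K]
    (hE₁ : Fintype.card E₁ = q ^ r₁) (hE₂ : Fintype.card E₂ = q ^ r₂)
    (hK : Fintype.card K = q ^ m) (hq : IsPrimePow q)
    (h₁ : 0 < r₁) (h₂ : 0 < r₂) (hd₁ : r₁ ∣ m) (hd₂ : r₂ ∣ m) :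
    Nat.card {x : K // Algebra.trace E₁ K x = 0 ∧ Algebra.trace E₂ K x = 0}
      = q ^ (m + Nat.gcd r₁ r₂ - (r₁ + r₂)) := by
  classical
  obtain ⟨p, s, hpp, hs, hq'⟩ := hq
  have hp : p.Prime := hpp.nat_prime
  haveI : Fact p.Prime := ⟨hp⟩
  have hq2 : 2 ≤ q := by
    calc 2 ≤ p := hp.two_le
      _ ≤ p ^ s := Nat.le_self_pow hs.ne' p
      _ = q := hq'
  set t := Nat.gcd r₁ r₂ with htdef
  have ht : 0 < t := Nat.gcd_pos_of_pos_left _ h₁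
  have htr₁ : t ∣ r₁ := Nat.gcd_dvd_left _ _
  have htr₂ : t ∣ r₂ := Nat.gcd_dvd_right _ _
  have hm : 0 < m := by
    rcases Nat.eq_zero_or_pos m with h | h
    · exfalso
      have := Fintype.one_lt_card (α := K)
      rw [hK, h, pow_zero] at this
      omega
    · exact h
  have hmr₁ : r₁ ≤ m := Nat.le_of_dvd hm hd₁
  have hmr₂ : r₂ ≤ m := Nat.le_of_dvd hm hd₂
  have htle₁ : t ≤ r₁ := Nat.le_of_dvd h₁ htr₁
  -- key exponent inequality
  have hexp : r₁ + r₂ ≤ m + t := by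
    obtain ⟨a, ha⟩ := htr₁
    obtain ⟨b, hb⟩ := htr₂
    have ha1 : 1 ≤ a := by
      rcases Nat.eq_zero_or_pos a with rfl | h
      · rw [mul_zero] at ha; omega
      · exact h
    have hb1 : 1 ≤ b := by
      rcases Nat.eq_zero_or_pos b with rfl | h
      · rw [mul_zero] at hb; omega
      · exact h
    have hlcm : Nat.lcm r₁ r₂ = t * (a * b) := by
      have h0 := Nat.gcd_mul_lcm r₁ r₂
      rw [← htdef] at h0
      apply Nat.eq_of_mul_eq_mul_left ht
      rw [h0, ha, hb]; ring
    have hlm : Nat.lcm r₁ r₂ ≤ m := Nat.le_of_dvd hm (Nat.lcm_dvd hd₁ hd₂)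
    obtain ⟨a', rfl⟩ : ∃ a', a = a' + 1 := ⟨a - 1, by omega⟩
    obtain ⟨b', rfl⟩ : ∃ b', b = b' + 1 := ⟨b - 1, by omega⟩
    have hx : t * ((a' + 1) * (b' + 1)) = t * (a' * b') + t * a' + t * b' + t := by ring
    have hy : t * (a' + 1) = t * a' + t := by ring
    have hz : t * (b' + 1) = t * b' + t := by ring
    rw [hlcm, hx] at hlm
    rw [ha, hb, hy, hz]
    omega
  set Q₁ := q ^ r₁ with hQ₁
  set Q₂ := q ^ r₂ with hQ₂
  set QT := q ^ t with hQT
  have hQ₁2 : 2 ≤ Q₁ := by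
    calc 2 ≤ q := hq2
      _ = q ^ 1 := (pow_one q).symm
      _ ≤ Q₁ := Nat.pow_le_pow_right (by omega) h₁
  have hQ₂2 : 2 ≤ Q₂ := by
    calc 2 ≤ q := hq2
      _ = q ^ 1 := (pow_one q).symm
      _ ≤ Q₂ := Nat.pow_le_pow_right (by omega) h₂
  have hQT2 : 2 ≤ QT := by
    calc 2 ≤ q := hq2
      _ = q ^ 1 := (pow_one q).symm
      _ ≤ QT := Nat.pow_le_pow_right (by omega) ht
  have hQ₁p : Q₁ = p ^ (s * r₁) := by rw [hQ₁, ← hq', ← pow_mul]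
  haveI hKp : CharP K p := by
    refine charP_of_card_pow hp (n := s * m) ?_ ?_
    · positivity
    · rw [hK, ← hq', ← pow_mul]
  -- Frobenius as E₁-algebra equiv
  obtain ⟨φ, hφ⟩ := exists_frobAlg E₁ K
  have hφ' : ∀ x : K, φ x = x ^ Q₁ := by intro x; rw [hφ, hE₁]
  -- the additive map Δ : y ↦ y ^ Q₁ - y
  set Δ : K →+ K := AddMonoidHom.mk' (fun y => y ^ Q₁ - y) (by
    intro a b
    show (a + b) ^ Q₁ - (a + b) = (a ^ Q₁ - a) + (b ^ Q₁ - b)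
    rw [hQ₁p, add_pow_char_pow]
    ring) with hΔdef
  have hΔ : ∀ y : K, Δ y = y ^ Q₁ - y := fun y => rfl
  -- trace identities
  have hT₁Δ : ∀ y : K, Algebra.trace E₁ K (Δ y) = 0 := by
    intro y
    rw [hΔ, map_sub, ← hφ' y, trace_algEquiv φ y, sub_self]
  have hT₂pow : ∀ y : K, Algebra.trace E₂ K (y ^ Q₁) = (Algebra.trace E₂ K y) ^ Q₁ := by
    intro y
    rw [hQ₁p]
    exact trace_pow_char (s * r₁) y
  have hT₂Δ : ∀ y : K, Algebra.trace E₂ K (Δ y)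
      = (Algebra.trace E₂ K y) ^ Q₁ - Algebra.trace E₂ K y := by
    intro y
    rw [hΔ, map_sub, hT₂pow]
  -- surjectivity of the traces
  have hsurj₁ : Function.Surjective (Algebra.trace E₁ K) := trace_surjective E₁ K
  have hsurj₂ : Function.Surjective (Algebra.trace E₂ K) := trace_surjective E₂ K
  set T₁ : K →+ E₁ := (Algebra.trace E₁ K).toAddMonoidHom with hT₁def
  set T₂ : K →+ E₂ := (Algebra.trace E₂ K).toAddMonoidHom with hT₂def
  have hT₁app : ∀ x : K, T₁ x = Algebra.trace E₁ K x := fun _ => rfl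
  have hT₂app : ∀ x : K, T₂ x = Algebra.trace E₂ K x := fun _ => rfl
  -- kernel cardinalities of the traces
  set k₁ := (Finset.univ.filter fun x : K => T₁ x = 0).card with hk₁def
  set k₂ := (Finset.univ.filter fun x : K => T₂ x = 0).card with hk₂def
  have himg₁ : (Finset.univ.image T₁) = (Finset.univ : Finset E₁) := by
    apply Finset.eq_univ_iff_forall.2
    intro b
    obtain ⟨x, hx⟩ := hsurj₁ b
    exact Finset.mem_image.2 ⟨x, Finset.mem_univ x, hx⟩
  have himg₂ : (Finset.univ.image T₂) = (Finset.univ : Finset E₂) := by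
    apply Finset.eq_univ_iff_forall.2
    intro b
    obtain ⟨x, hx⟩ := hsurj₂ b
    exact Finset.mem_image.2 ⟨x, Finset.mem_univ x, hx⟩
  have hkmul₁ : q ^ m = Q₁ * k₁ := by
    have := cardMulImage T₁
    rw [himg₁, Finset.card_univ, hE₁, hK] at this
    exact this
  have hkmul₂ : q ^ m = Q₂ * k₂ := by
    have := cardMulImage T₂
    rw [himg₂, Finset.card_univ, hE₂, hK] at this
    exact this
  have hqpos : 0 < q := by omega
  have hk₁val : k₁ = q ^ (m - r₁) := by
    apply Nat.eq_of_mul_eq_mul_left (pow_pos hqpos r₁)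
    rw [← hkmul₁, ← pow_add]
    congr 1
    omega
  have hk₂val : k₂ = q ^ (m - r₂) := by
    apply Nat.eq_of_mul_eq_mul_left (pow_pos hqpos r₂)
    rw [← hkmul₂, ← pow_add]
    congr 1
    omega
  -- kernel and image of Δ
  set kΔ := (Finset.univ.filter fun y : K => Δ y = 0).card with hkΔdef
  have hkΔle : kΔ ≤ Q₁ := by
    have hsub : (Finset.univ.filter fun y : K => Δ y = 0)
        ⊆ (Finset.univ.filter fun y : K => y ^ Q₁ = y) := by
      intro y hy
      simp only [Finset.mem_filter, Finset.mem_univ, true_and, hΔ, sub_eq_zero] at hy ⊢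
      exact hy
    exact le_trans (Finset.card_le_card hsub) (rootBound hQ₁2)
  have hmulΔ : q ^ m = (Finset.univ.image Δ).card * kΔ := by
    rw [← hK]; exact cardMulImage Δ
  set S₁ := (Finset.univ.filter fun x : K => T₁ x = 0) with hS₁def
  have himgΔsub : Finset.univ.image Δ ⊆ S₁ := by
    intro x hx
    obtain ⟨y, _, rfl⟩ := Finset.mem_image.1 hx
    simp only [hS₁def, Finset.mem_filter, Finset.mem_univ, true_and]
    rw [hT₁app]
    exact hT₁Δ y
  have himgΔge : q ^ (m - r₁) ≤ (Finset.univ.image Δ).card := by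
    have h1 : q ^ (m - r₁) * Q₁ ≤ (Finset.univ.image Δ).card * Q₁ := by
      calc q ^ (m - r₁) * Q₁ = q ^ m := by rw [← pow_add]; congr 1; omega
        _ = (Finset.univ.image Δ).card * kΔ := hmulΔ
        _ ≤ (Finset.univ.image Δ).card * Q₁ := Nat.mul_le_mul_left _ hkΔle
    exact Nat.le_of_mul_le_mul_right h1 (by omega)
  have himgΔ : Finset.univ.image Δ = S₁ := by
    apply Finset.eq_of_subset_of_card_le himgΔsub
    calc S₁.card = k₁ := rfl
      _ = q ^ (m - r₁) := hk₁val
      _ ≤ _ := himgΔge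
  have hkΔval : kΔ = Q₁ := by
    have h1 : q ^ (m - r₁) * kΔ = q ^ (m - r₁) * Q₁ := by
      rw [← pow_add]
      have : (Finset.univ.image Δ).card = q ^ (m - r₁) := by
        rw [himgΔ, hS₁def, ← hk₁def, hk₁val]
      rw [← this, ← hmulΔ]
      congr 1
      omega
    exact Nat.eq_of_mul_eq_mul_left (pow_pos hqpos _) h1
  -- the set A
  set A := (Finset.univ.filter fun y : K => T₂ (Δ y) = 0) with hAdef
  set S₀ := (Finset.univ.filter fun x : K =>
    Algebra.trace E₁ K x = 0 ∧ Algebra.trace E₂ K x = 0) with hS₀def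
  set N := S₀.card with hNdef
  -- first evaluation: A.card = N * Q₁
  have hAcard₁ : A.card = N * Q₁ := by
    have hmap : ∀ y ∈ A, Δ y ∈ S₀ := by
      intro y hy
      simp only [hAdef, Finset.mem_filter, Finset.mem_univ, true_and] at hy
      simp only [hS₀def, Finset.mem_filter, Finset.mem_univ, true_and]
      exact ⟨hT₁Δ y, hy⟩
    rw [Finset.card_eq_sum_card_fiberwise hmap]
    have hterm : ∀ x ∈ S₀, (A.filter fun y => Δ y = x).card = Q₁ := by
      intro x hx
      simp only [hS₀def, Finset.mem_filter, Finset.mem_univ, true_and] at hx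
      have heq : (A.filter fun y => Δ y = x) = (Finset.univ.filter fun y => Δ y = x) := by
        ext y
        simp only [hAdef, Finset.mem_filter, Finset.mem_univ, true_and, Finset.filter_filter]
        constructor
        · rintro ⟨_, h⟩; exact h
        · rintro h
          refine ⟨?_, h⟩
          rw [h, hT₂app]
          exact hx.2
      have hex : ∃ y : K, Δ y = x := by
        have : x ∈ S₁ := by
          simp only [hS₁def, Finset.mem_filter, Finset.mem_univ, true_and, hT₁app]
          exact hx.1
        rw [← himgΔ] at this
        obtain ⟨y, _, hy⟩ := Finset.mem_image.1 this
        exact ⟨y, hy⟩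
      rw [heq, fiberCard Δ hex, ← hkΔdef, hkΔval]
    rw [Finset.sum_congr rfl hterm, Finset.sum_const, smul_eq_mul]
  -- second evaluation: A.card = B.card * k₂
  set B := (Finset.univ.filter fun b : E₂ => b ^ Q₁ = b) with hBdef
  have hAeq : A = (Finset.univ.filter fun y : K => (T₂ y) ^ Q₁ = T₂ y) := by
    ext y
    simp only [hAdef, Finset.mem_filter, Finset.mem_univ, true_and]
    rw [hT₂app, hT₂Δ, sub_eq_zero, hT₂app]
  have hAcard₂ : A.card = B.card * k₂ := by
    have hmap : ∀ y ∈ A, T₂ y ∈ B := by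
      intro y hy
      rw [hAeq] at hy
      simp only [Finset.mem_filter, Finset.mem_univ, true_and] at hy
      simp only [hBdef, Finset.mem_filter, Finset.mem_univ, true_and]
      exact hy
    rw [Finset.card_eq_sum_card_fiberwise hmap]
    have hterm : ∀ b ∈ B, (A.filter fun y => T₂ y = b).card = k₂ := by
      intro b hb
      simp only [hBdef, Finset.mem_filter, Finset.mem_univ, true_and] at hb
      have heq : (A.filter fun y => T₂ y = b) = (Finset.univ.filter fun y => T₂ y = b) := by
        rw [hAeq]
        ext y
        simp only [Finset.mem_filter, Finset.mem_univ, true_and, Finset.filter_filter]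
        constructor
        · rintro ⟨_, h⟩; exact h
        · rintro h
          exact ⟨by rw [h]; exact hb, h⟩
      have hex : ∃ y : K, T₂ y = b := hsurj₂ b
      rw [heq, fiberCard T₂ hex]
    rw [Finset.sum_congr rfl hterm, Finset.sum_const, smul_eq_mul]
  -- B.card = QT
  have hQT1dvd₁ : QT - 1 ∣ Q₁ - 1 := by
    obtain ⟨a, ha⟩ := htr₁
    have := Nat.sub_dvd_pow_sub_pow QT 1 a
    rw [one_pow, hQT, ← pow_mul, ← ha] at this
    exact this
  have hQT1dvd₂ : QT - 1 ∣ Q₂ - 1 := by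
    obtain ⟨b, hb⟩ := htr₂
    have := Nat.sub_dvd_pow_sub_pow QT 1 b
    rw [one_pow, hQT, ← pow_mul, ← hb] at this
    exact this
  have hgcddvd : Nat.gcd (Q₁ - 1) (Q₂ - 1) ∣ QT - 1 := gcdDvd (by omega)
  have hkey : ∀ (b : E₂), b ≠ 0 → ∀ n : ℕ, 1 ≤ n → (b ^ n = b ↔ b ^ (n - 1) = 1) := by
    intro b hb n hn
    constructor
    · intro h
      have h2 : b ^ (n - 1) * b = 1 * b := by
        rw [one_mul, ← pow_succ]
        rw [show n - 1 + 1 = n by omega]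
        exact h
      exact mul_right_cancel₀ hb h2
    · intro h
      calc b ^ n = b ^ (n - 1 + 1) := by congr 1; omega
        _ = b ^ (n - 1) * b := pow_succ _ _
        _ = b := by rw [h, one_mul]
  have hBeq : B = (Finset.univ.filter fun b : E₂ => b ^ QT = b) := by
    ext b
    simp only [hBdef, Finset.mem_filter, Finset.mem_univ, true_and]
    rcases eq_or_ne b 0 with rfl | hb
    · constructor
      · intro _; exact zero_pow (by omega)
      · intro _; exact zero_pow (by omega)
    · rw [hkey b hb Q₁ (by omega), hkey b hb QT (by omega)]
      constructor
      · intro h1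
        have h2 : b ^ (Q₂ - 1) = 1 := by
          rw [← hkey b hb Q₂ (by omega)]
          rw [← hE₂]
          exact FiniteField.pow_card b
        have h3 := pow_gcd_eq_one.mpr ⟨h1, h2⟩
        obtain ⟨c, hc⟩ := hgcddvd
        rw [hc, pow_mul, h3, one_pow]
      · intro h1
        obtain ⟨c, hc⟩ := hQT1dvd₁
        rw [hc, pow_mul, h1, one_pow]
  have hBcard : B.card = QT := by
    rw [hBeq]
    apply le_antisymm (rootBound hQT2)
    apply cardPowEqGe hQT2
    rw [hE₂]
    exact hQT1dvd₂
  -- final arithmetic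
  have hfinal : N * Q₁ = QT * q ^ (m - r₂) := by
    rw [← hAcard₁, hAcard₂, hBcard, hk₂val]
  have hNval : N = q ^ (m + t - (r₁ + r₂)) := by
    apply Nat.eq_of_mul_eq_mul_right (pow_pos hqpos r₁)
    rw [← hQ₁] at *
    rw [hfinal, hQT, ← pow_add, ← pow_add]
    congr 1
    omega
  rw [Nat.card_eq_fintype_card, Fintype.card_subtype, ← hS₀def, ← hNdef, hNval]
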